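/- Let 𝔅 be an atomless complete Boolean algebra carrying a strictly positive continuous submeasure μ. Then there exists an injective Boolean-algebra homomorphism F from the algebra of clopen subsets of ω × 2^ω (ω taken discrete, 2^ω the Cantor space) into 𝔅 such that for every n ∈ ω and every sequence f₁, f₂, ... ∈ 2^ω there exist N₁, N₂, ... ∈ ω with ⨆_{i∈ω} F({n} × [f_i ↾ N_i]) < F({n} × 2^ω), where [s] denotes the basic clopen set of all elements of 2^ω extending the finite string s. -/

import Mathlib

open Filter Topology

namespace Statement0Aux

variable {B : Type*} [CompleteBooleanAlgebra B]

/-- Bundled data for the construction. -/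
structure SubM (B : Type*) [CompleteBooleanAlgebra B] where
  μ : B → ℝ
  zero : μ ⊥ = 0
  mono : ∀ a b : B, a ≤ b → μ a ≤ μ b
  subadd : ∀ a b : B, μ (a ⊔ b) ≤ μ a + μ b
  pos : ∀ a : B, μ a = 0 → a = ⊥
  cont : ∀ a : ℕ → B, Antitone a → (⨅ n, a n) = ⊥ →
      Tendsto (fun n => μ (a n)) atTop (𝓝 0)
  atomless : ∀ b : B, ¬ IsAtom b
  tnb : (⊤ : B) ≠ ⊥

theorem SubM.nonneg (m : SubM B) (a : B) : 0 ≤ m.μ a := m.zero ▸ m.mono ⊥ a bot_le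

theorem SubM.pos' (m : SubM B) {a : B} (h : a ≠ ⊥) : 0 < m.μ a :=
  lt_of_le_of_ne (m.nonneg a) (fun h0 => h (m.pos a h0.symm))

theorem SubM.lt_of_mu_lt (m : SubM B) {a b : B} (hle : a ≤ b) (h : m.μ a < m.μ b) : a < b :=
  lt_of_le_of_ne hle (fun h' => absurd (h' ▸ h) (lt_irrefl _))

theorem SubM.diff_bound (m : SubM B) (a b : B) : m.μ a ≤ m.μ b + m.μ (a ⊓ bᶜ) := by
  have h : a ≤ b ⊔ a ⊓ bᶜ := by
    conv_lhs => rw [← sup_inf_inf_compl (x := a) (y := b)]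
    exact sup_le_sup_right inf_le_right _
  exact le_trans (m.mono _ _ h) (m.subadd _ _)

/-- Atomless splitting. -/
theorem SubM.split (m : SubM B) {b : B} (hb : b ≠ ⊥) :
    ∃ u v : B, u ≠ ⊥ ∧ v ≠ ⊥ ∧ u ⊔ v = b ∧ Disjoint u v := by
  have h := m.atomless b
  rw [IsAtom] at h
  push_neg at h
  obtain ⟨u, hub, hu⟩ := h hb
  refine ⟨u, b ⊓ uᶜ, hu, ?_, ?_, ?_⟩
  · intro h0
    apply absurd (le_antisymm hub.le ?_) hub.ne
    conv_lhs => rw [← sup_inf_inf_compl (x := b) (y := u), h0, sup_bot_eq]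
    exact inf_le_right
  · rw [sup_inf_left, sup_compl_eq_top, inf_top_eq, sup_eq_right.mpr hub.le]
  · exact (disjoint_compl_right.inf_right' b).symm.symm |>.mono_right le_rfl
    |>.symm.symm

/-- For a pairwise disjoint sequence, some element has small submeasure. -/
theorem SubM.disjoint_seq_small (m : SubM B) (x : ℕ → B)
    (hd : ∀ i j, i ≠ j → Disjoint (x i) (x j)) {ε : ℝ} (hε : 0 < ε) :
    ∃ k, m.μ (x k) < ε := by
  set t : ℕ → B := fun k => ⨆ i, x (k + 1 + i) with ht
  have hanti : Antitone t := by
    apply antitone_nat_of_succ_le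
    intro k
    refine iSup_le fun i => ?_
    have : k + 1 + 1 + i = k + 1 + (1 + i) := by ring
    rw [this]
    exact le_iSup (fun i => x (k + 1 + i)) (1 + i)
  have hinf : (⨅ k, t k) = ⊥ := by
    set y := ⨅ k, t k with hy
    have hyx : ∀ j, y ⊓ x j = ⊥ := by
      intro j
      have h1 : y ≤ t j := iInf_le t j
      have h2 : Disjoint (x j) (t j) := by
        refine disjoint_iSup_iff.mpr fun i => hd _ _ (by omega)
      exact (h2.symm.mono_left h1).eq_bot
    have h0 : y ≤ t 0 := iInf_le t 0
    have : y = y ⊓ t 0 := (inf_eq_left.mpr h0).symm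
    rw [this, ht, inf_iSup_eq]
    simp only [hyx, iSup_bot]
  have := m.cont t hanti hinf
  rw [Metric.tendsto_atTop] at this
  obtain ⟨K, hK⟩ := this ε hε
  have h1 : m.μ (x (K + 1)) ≤ m.μ (t K) :=
    m.mono _ _ (by simpa using le_iSup (fun i => x (K + 1 + i)) 0)
  have h2 := hK K le_rfl
  rw [Real.dist_eq, sub_zero, abs_of_nonneg (m.nonneg _)] at h2
  exact ⟨K + 1, lt_of_le_of_lt h1 h2⟩

end Statement0Aux

namespace Statement0Aux

variable {B : Type*} [CompleteBooleanAlgebra B]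

noncomputable def SubM.splitFn (m : SubM B) (b : B) : B × B := by
  classical
  exact if h : b ≠ ⊥ then ⟨(m.split h).choose, (m.split h).choose_spec.choose⟩ else (⊥, ⊥)

theorem SubM.splitFn_spec (m : SubM B) {b : B} (hb : b ≠ ⊥) :
    (m.splitFn b).1 ≠ ⊥ ∧ (m.splitFn b).2 ≠ ⊥ ∧ (m.splitFn b).1 ⊔ (m.splitFn b).2 = b ∧
      Disjoint (m.splitFn b).1 (m.splitFn b).2 := by
  classical
  obtain ⟨h1, h2, h3, h4⟩ := (m.split hb).choose_spec.choose_spec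
  rw [SubM.splitFn]
  simp only [hb, dif_pos, ne_eq, not_false_eq_true]
  exact ⟨h1, h2, h3, h4⟩

/-- L1: below any nonzero element there is a nonzero element of small submeasure. -/
theorem SubM.exists_small (m : SubM B) {b : B} (hb : b ≠ ⊥) {ε : ℝ} (hε : 0 < ε) :
    ∃ x : B, x ≠ ⊥ ∧ x ≤ b ∧ m.μ x < ε := by
  set r : ℕ → B := fun k => (fun c => (m.splitFn c).2)^[k] b with hr
  have hrsucc : ∀ k, r (k + 1) = (m.splitFn (r k)).2 := by
    intro k
    simp only [hr]
    rw [Function.iterate_succ_apply']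
  have hrne : ∀ k, r k ≠ ⊥ := by
    intro k
    induction k with
    | zero => exact hb
    | succ k ih => rw [hrsucc k]; exact (m.splitFn_spec ih).2.1
  set x : ℕ → B := fun k => (m.splitFn (r k)).1 with hx
  have hxne : ∀ k, x k ≠ ⊥ := fun k => (m.splitFn_spec (hrne k)).1
  have hxler : ∀ k, x k ≤ r k := fun k =>
    le_sup_left.trans (m.splitFn_spec (hrne k)).2.2.1.le
  have hrler : ∀ k, r (k + 1) ≤ r k := fun k => by
    rw [hrsucc k]
    exact le_sup_right.trans (m.splitFn_spec (hrne k)).2.2.1.le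
  have hranti : Antitone r := antitone_nat_of_succ_le hrler
  have hrleb : ∀ k, r k ≤ b := fun k => by exact hranti (Nat.zero_le k)
  have hdisj : ∀ i j, i ≠ j → Disjoint (x i) (x j) := by
    have key : ∀ i j, i < j → Disjoint (x i) (x j) := by
      intro i j hij
      have h1 : x j ≤ r (i + 1) := (hxler j).trans (hranti hij)
      have h2 : Disjoint (x i) (r (i + 1)) := by
        rw [hrsucc i]; exact (m.splitFn_spec (hrne i)).2.2.2
      exact h2.mono_right h1
    intro i j hij
    rcases lt_or_gt_of_ne hij with h | h
    · exact key i j h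
    · exact (key j i h).symm
  obtain ⟨k, hk⟩ := m.disjoint_seq_small x hdisj hε
  exact ⟨x k, hxne k, (hxler k).trans (hrleb k), hk⟩

theorem le_foldr_sup {L : List B} {p : B} (hp : p ∈ L) : p ≤ L.foldr (· ⊔ ·) ⊥ := by
  induction L with
  | nil => simp at hp
  | cons q L ih =>
    rcases List.mem_cons.mp hp with h | h
    · subst h; exact le_sup_left
    · exact (ih h).trans le_sup_right

theorem foldr_sup_le {L : List B} {c : B} (h : ∀ p ∈ L, p ≤ c) : L.foldr (· ⊔ ·) ⊥ ≤ c := by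
  induction L with
  | nil => simp
  | cons q L ih =>
    simp only [List.foldr_cons]
    exact sup_le (h q (by simp)) (ih fun p hp => h p (List.mem_cons_of_mem _ hp))

theorem disjoint_foldr_sup {L : List B} {a : B} (h : ∀ p ∈ L, Disjoint a p) :
    Disjoint a (L.foldr (· ⊔ ·) ⊥) := by
  induction L with
  | nil => simp
  | cons q L ih =>
    simp only [List.foldr_cons]
    exact (h q (by simp)).sup_right (ih fun p hp => h p (List.mem_cons_of_mem _ hp))

/-- The "partitionable" predicate. -/
def SubM.Part (m : SubM B) (ε : ℝ) (r : B) : Prop :=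
  ∃ L : List B, (∀ p ∈ L, p ≠ ⊥ ∧ m.μ p < ε) ∧ L.Pairwise Disjoint ∧
    L.foldr (· ⊔ ·) ⊥ = r

theorem SubM.part_of_small (m : SubM B) {ε : ℝ} {r : B} (h : m.μ r < ε) : m.Part ε r := by
  classical
  by_cases hr : r = ⊥
  · exact ⟨[], by simp, by simp, by simp [hr]⟩
  · exact ⟨[r], by simp [hr, h], by simp, by simp⟩

theorem SubM.part_of_piece (m : SubM B) {ε : ℝ} {r x : B} (hx : x ≠ ⊥) (hxr : x ≤ r)
    (hμ : m.μ x < ε) (h : m.Part ε (r ⊓ xᶜ)) : m.Part ε r := by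
  obtain ⟨L, h1, h2, h3⟩ := h
  refine ⟨x :: L, ?_, ?_, ?_⟩
  · intro p hp
    rcases List.mem_cons.mp hp with h | h
    · subst h; exact ⟨hx, hμ⟩
    · exact h1 p h
  · refine List.pairwise_cons.mpr ⟨?_, h2⟩
    intro p hp
    have : p ≤ r ⊓ xᶜ := h3 ▸ le_foldr_sup hp
    exact disjoint_compl_right.mono_right (this.trans inf_le_right)
  · simp only [List.foldr_cons, h3]
    rw [sup_inf_left, sup_compl_eq_top, inf_top_eq, sup_eq_right.mpr hxr]

/-- L2: every nonzero element is a finite disjoint union of nonzero pieces of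
small submeasure. -/
theorem SubM.part (m : SubM B) {ε : ℝ} (hε : 0 < ε) (r : B) : m.Part ε r := by
  classical
  by_contra hcon
  -- greedy choice function
  have hch : ∀ s : B, ¬ m.Part ε s → s ≠ ⊥ ∧
      ∃ x : B, x ≠ ⊥ ∧ x ≤ s ∧ m.μ x < ε ∧
        sSup (m.μ '' {y : B | y ≠ ⊥ ∧ y ≤ s ∧ m.μ y < ε}) / 2 < m.μ x := by
    intro s hs
    have hsne : s ≠ ⊥ := by
      intro h0
      exact hs (m.part_of_small (by simp [h0, m.zero, hε]))
    refine ⟨hsne, ?_⟩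
    set S := {y : B | y ≠ ⊥ ∧ y ≤ s ∧ m.μ y < ε} with hS
    obtain ⟨y0, hy0⟩ := m.exists_small hsne hε
    have hne : (m.μ '' S).Nonempty := ⟨m.μ y0, y0, hy0, rfl⟩
    have hbdd : BddAbove (m.μ '' S) := ⟨ε, by rintro _ ⟨y, hy, rfl⟩; exact hy.2.2.le⟩
    have hpos : 0 < sSup (m.μ '' S) := by
      have := le_csSup hbdd (⟨y0, hy0, rfl⟩ : m.μ y0 ∈ m.μ '' S)
      exact lt_of_lt_of_le (m.pos' hy0.1) this
    obtain ⟨_, ⟨x, hxS, rfl⟩, hgt⟩ := exists_lt_of_lt_csSup hne (half_lt_self hpos)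
    exact ⟨x, hxS.1, hxS.2.1, hxS.2.2, hgt⟩
  -- recursion
  classical
  set gfn : B → B := fun s => if h : ¬ m.Part ε s then ((hch s h).2).choose else ⊥ with hgfn
  have hgs : ∀ s, ¬ m.Part ε s → gfn s ≠ ⊥ ∧ gfn s ≤ s ∧ m.μ (gfn s) < ε ∧
      sSup (m.μ '' {y : B | y ≠ ⊥ ∧ y ≤ s ∧ m.μ y < ε}) / 2 < m.μ (gfn s) := by
    intro s hs
    have := ((hch s hs).2).choose_spec
    rw [hgfn]
    simp only [hs, dif_pos, not_false_eq_true]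
    exact ⟨this.1, this.2.1, this.2.2.1, this.2.2.2⟩
  set q : ℕ → B := fun k => (fun s => s ⊓ (gfn s)ᶜ)^[k] r with hq
  have hqsucc : ∀ k, q (k + 1) = q k ⊓ (gfn (q k))ᶜ := by
    intro k
    simp only [hq]
    rw [Function.iterate_succ_apply']
  have hnp : ∀ k, ¬ m.Part ε (q k) := by
    intro k
    induction k with
    | zero => exact hcon
    | succ k ih =>
      intro hP
      obtain ⟨h1, h2, h3, _⟩ := hgs _ ih
      exact ih (m.part_of_piece h1 h2 h3 (by rwa [← hqsucc k]))
  have hqne : ∀ k, q k ≠ ⊥ := fun k => (hch _ (hnp k)).1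
  have hqdec : ∀ k, q (k + 1) ≤ q k := fun k => (hqsucc k) ▸ inf_le_left
  have hqanti : Antitone q := antitone_nat_of_succ_le hqdec
  set x : ℕ → B := fun k => gfn (q k) with hx
  have hdisj : ∀ i j, i ≠ j → Disjoint (x i) (x j) := by
    have key : ∀ i j, i < j → Disjoint (x i) (x j) := by
      intro i j hij
      have h1 : x j ≤ q (i + 1) := ((hgs _ (hnp j)).2.1).trans (hqanti hij)
      have h2 : q (i + 1) ≤ (x i)ᶜ := (hqsucc i) ▸ inf_le_right
      exact disjoint_compl_right.mono_right (h1.trans h2)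
    intro i j hij
    rcases lt_or_gt_of_ne hij with h | h
    · exact key i j h
    · exact (key j i h).symm
  by_cases hd : (⨅ k, q k) = ⊥
  · have := m.cont q hqanti hd
    rw [Metric.tendsto_atTop] at this
    obtain ⟨K, hK⟩ := this ε hε
    have h2 := hK K le_rfl
    rw [Real.dist_eq, sub_zero, abs_of_nonneg (m.nonneg _)] at h2
    exact hnp K (m.part_of_small h2)
  · obtain ⟨y, hy1, hy2, hy3⟩ := m.exists_small hd hε
    have hykey : ∀ k, m.μ y / 2 < m.μ (x k) := by
      intro k
      have hyS : m.μ y ∈ m.μ '' {z : B | z ≠ ⊥ ∧ z ≤ q k ∧ m.μ z < ε} :=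
        ⟨y, ⟨hy1, hy2.trans (iInf_le q k), hy3⟩, rfl⟩
      have hbdd : BddAbove (m.μ '' {z : B | z ≠ ⊥ ∧ z ≤ q k ∧ m.μ z < ε}) :=
        ⟨ε, by rintro _ ⟨z, hz, rfl⟩; exact hz.2.2.le⟩
      have := le_csSup hbdd hyS
      calc m.μ y / 2 ≤ _ / 2 := by linarith
        _ < m.μ (x k) := (hgs _ (hnp k)).2.2.2
    obtain ⟨k, hk⟩ := m.disjoint_seq_small x hdisj (half_pos (m.pos' hy1))
    exact absurd hk (not_lt.mpr (hykey k).le)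

/-- L2 with at least two pieces. -/
theorem SubM.part2 (m : SubM B) {ε : ℝ} (hε : 0 < ε) {b : B} (hb : b ≠ ⊥) :
    ∃ L : List B, (∀ p ∈ L, p ≠ ⊥ ∧ m.μ p < ε) ∧ L.Pairwise Disjoint ∧
      L.foldr (· ⊔ ·) ⊥ = b ∧ 2 ≤ L.length := by
  obtain ⟨L, h1, h2, h3⟩ := m.part hε b
  match L, h1, h2, h3 with
  | [], h1, h2, h3 => exact absurd h3.symm hb
  | [p], h1, h2, h3 =>
    have hpb : p = b := by simpa using h3
    obtain ⟨u, v, hu, hv, huv, hdis⟩ := m.split hb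
    have hub : u ≤ b := le_sup_left.trans huv.le
    have hvb : v ≤ b := le_sup_right.trans huv.le
    have hμb : m.μ b < ε := by
      have := (h1 p (by simp)).2
      rwa [hpb] at this
    refine ⟨[u, v], ?_, ?_, ?_, by simp⟩
    · intro p hp
      rcases List.mem_cons.mp hp with h | h
      · subst h; exact ⟨hu, lt_of_le_of_lt (m.mono _ _ hub) hμb⟩
      · simp only [List.mem_singleton] at h
        subst h; exact ⟨hv, lt_of_le_of_lt (m.mono _ _ hvb) hμb⟩
    · simp [hdis]
    · simp [huv]
  | p :: q :: L, h1, h2, h3 =>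
    exact ⟨p :: q :: L, h1, h2, h3, by simp⟩

end Statement0Aux

namespace Statement0Aux

variable {B : Type*} [CompleteBooleanAlgebra B]

structure MyNode (B : Type*) where
  tgt : ℝ
  pieces : List B

def MyNode.elt (ν : MyNode B) : B := ν.pieces.foldr (· ⊔ ·) ⊥

def SubM.Good (m : SubM B) (ν : MyNode B) : Prop :=
  0 < ν.tgt ∧ ν.pieces ≠ [] ∧ (∀ p ∈ ν.pieces, p ≠ ⊥ ∧ m.μ p < ν.tgt) ∧
    ν.pieces.Pairwise Disjoint

theorem SubM.Good.elt_ne {m : SubM B} {ν : MyNode B} (h : m.Good ν) : ν.elt ≠ ⊥ := by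
  obtain ⟨p, rest, hcons⟩ := List.exists_cons_of_ne_nil h.2.1
  have hp : p ≤ ν.elt := le_foldr_sup (by rw [hcons]; simp)
  intro h0
  exact (h.2.2.1 p (by rw [hcons]; simp)).1 (le_bot_iff.mp (h0 ▸ hp))

noncomputable def SubM.refine (m : SubM B) (ν : MyNode B) : MyNode B := by
  classical
  exact if h : ν.pieces.length ≤ 1 ∧ 0 < ν.tgt ∧ ν.elt ≠ ⊥ then
    ⟨ν.tgt / 2, (m.part2 (half_pos h.2.1) h.2.2).choose⟩
  else ν

theorem SubM.refine_spec (m : SubM B) {ν : MyNode B} (h : m.Good ν) :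
    m.Good (m.refine ν) ∧ (m.refine ν).elt = ν.elt ∧ 2 ≤ (m.refine ν).pieces.length ∧
      (ν.pieces.length = 1 → (m.refine ν).tgt = ν.tgt / 2) ∧
      (2 ≤ ν.pieces.length → m.refine ν = ν) ∧ (m.refine ν).tgt ≤ ν.tgt := by
  classical
  by_cases hlen : ν.pieces.length ≤ 1
  · have hcond : ν.pieces.length ≤ 1 ∧ 0 < ν.tgt ∧ ν.elt ≠ ⊥ := ⟨hlen, h.1, h.elt_ne⟩
    have hre : m.refine ν = ⟨ν.tgt / 2, (m.part2 (half_pos hcond.2.1) hcond.2.2).choose⟩ := by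
      rw [SubM.refine]
      rw [dif_pos hcond]
    obtain ⟨h1, h2, h3, h4⟩ := (m.part2 (half_pos hcond.2.1) hcond.2.2).choose_spec
    have hlen2 : ¬ 2 ≤ ν.pieces.length := by omega
    rw [hre]
    refine ⟨⟨half_pos h.1, ?_, h1, h2⟩, h3, h4, fun _ => rfl,
      fun h2' => absurd h2' hlen2, by linarith [h.1]⟩
    intro h0
    have h0' : (m.part2 (half_pos hcond.2.1) hcond.2.2).choose = [] := h0
    rw [h0'] at h4
    simp at h4
  · have hre : m.refine ν = ν := by
      rw [SubM.refine]
      rw [dif_neg]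
      intro hc
      exact hlen hc.1
    rw [hre]
    exact ⟨h, rfl, by omega, fun h1 => absurd (by omega : ν.pieces.length ≤ 1) hlen,
      fun _ => rfl, le_rfl⟩

noncomputable def SubM.step (m : SubM B) (b : Bool) (ν : MyNode B) : MyNode B :=
  if b then ⟨(m.refine ν).tgt, (m.refine ν).pieces.tail⟩
  else ⟨(m.refine ν).tgt, (m.refine ν).pieces.take 1⟩

theorem SubM.step_spec (m : SubM B) {ν : MyNode B} (h : m.Good ν) :
    (∀ b, m.Good (m.step b ν)) ∧
    (m.step false ν).elt ⊔ (m.step true ν).elt = ν.elt ∧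
    Disjoint ((m.step false ν).elt) ((m.step true ν).elt) ∧
    (∀ b, (m.step b ν).tgt ≤ ν.tgt) ∧
    (∀ b, (m.step b ν).elt ≤ ν.elt) ∧
    (m.step false ν).pieces.length = 1 ∧
    (ν.pieces.length = 1 → ∀ b, (m.step b ν).tgt = ν.tgt / 2) ∧
    (2 ≤ ν.pieces.length → ∀ b, (m.step b ν).tgt = ν.tgt) ∧
    (2 ≤ ν.pieces.length → (m.step true ν).pieces.length < ν.pieces.length) := by
  obtain ⟨hg, helt, hlen, htgt1, hid, htgtle⟩ := m.refine_spec h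
  obtain ⟨p, rest, hcons⟩ := List.exists_cons_of_ne_nil hg.2.1
  have hrest : rest ≠ [] := by
    intro h0
    rw [hcons, h0] at hlen
    simp at hlen
  have hfalse : m.step false ν = ⟨(m.refine ν).tgt, [p]⟩ := by
    rw [SubM.step]; simp [hcons]
  have htrue : m.step true ν = ⟨(m.refine ν).tgt, rest⟩ := by
    rw [SubM.step]; simp [hcons]
  have hpmem : ∀ q ∈ (m.refine ν).pieces, q ≠ ⊥ ∧ m.μ q < (m.refine ν).tgt := hg.2.2.1
  have hpw : (∀ a' ∈ rest, Disjoint p a') ∧ List.Pairwise Disjoint rest := by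
    have := hg.2.2.2
    rw [hcons, List.pairwise_cons] at this
    exact this
  have heltf : (m.step false ν).elt = p := by
    rw [hfalse, MyNode.elt]
    simp
  have heltt : (m.step true ν).elt = rest.foldr (· ⊔ ·) ⊥ := by
    rw [htrue, MyNode.elt]
  have heltsplit : (m.step false ν).elt ⊔ (m.step true ν).elt = ν.elt := by
    rw [heltf, heltt, ← helt, MyNode.elt, hcons]
    simp
  have htgts : ∀ b, (m.step b ν).tgt = (m.refine ν).tgt := by
    intro b; cases b
    · rw [hfalse]
    · rw [htrue]
  have hgoods : ∀ b, m.Good (m.step b ν) := by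
    intro b
    cases b
    · rw [hfalse]
      refine ⟨hg.1, by simp, ?_, by simp⟩
      intro z hz
      have hz' : z = p := by simpa using hz
      subst hz'
      exact hpmem z (by rw [hcons]; simp)
    · rw [htrue]
      refine ⟨hg.1, hrest, ?_, hpw.2⟩
      intro q hq
      exact hpmem q (by rw [hcons]; exact List.mem_cons_of_mem _ hq)
  have hdisjelt : Disjoint ((m.step false ν).elt) ((m.step true ν).elt) := by
    rw [heltf, heltt]
    exact disjoint_foldr_sup hpw.1
  refine ⟨hgoods, heltsplit, hdisjelt, fun b => (htgts b).le.trans htgtle, ?_, ?_, ?_, ?_, ?_⟩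
  · intro b
    cases b
    · exact le_sup_left.trans heltsplit.le
    · exact le_sup_right.trans heltsplit.le
  · rw [hfalse]; rfl
  · intro h1 b
    rw [htgts b, htgt1 h1]
  · intro h2 b
    rw [htgts b]
    rw [hid h2]
  · intro h2
    have h3 : (m.step true ν).pieces.length = rest.length := by rw [htrue]
    have h4 : ν.pieces.length = rest.length + 1 := by
      rw [← hid h2, hcons]
      simp
    omega

end Statement0Aux

namespace Statement0Aux

variable {B : Type*} [CompleteBooleanAlgebra B]

noncomputable def SubM.walk (m : SubM B) (ν : MyNode B) (f : ℕ → Bool) : ℕ → MyNode B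
  | 0 => ν
  | k+1 => m.step (f k) (m.walk ν f k)

theorem SubM.walk_good (m : SubM B) {ν : MyNode B} (h : m.Good ν) (f : ℕ → Bool) :
    ∀ k, m.Good (m.walk ν f k) := by
  intro k
  induction k with
  | zero => exact h
  | succ k ih => exact ((m.step_spec ih).1) (f k)

theorem SubM.walk_elt_le (m : SubM B) {ν : MyNode B} (h : m.Good ν) (f : ℕ → Bool)
    {j k : ℕ} (hjk : j ≤ k) : (m.walk ν f k).elt ≤ (m.walk ν f j).elt := by
  induction k with
  | zero => rw [Nat.le_zero.mp hjk]
  | succ k ih =>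
    rcases Nat.lt_or_ge j (k+1) with hlt | hge
    · exact le_trans ((m.step_spec (m.walk_good h f k)).2.2.2.2.1 (f k)) (ih (by omega))
    · rw [le_antisymm hjk hge]

theorem SubM.walk_shift (m : SubM B) (ν : MyNode B) (f : ℕ → Bool) (k : ℕ) :
    m.walk ν f (k + 1) = m.walk (m.step (f 0) ν) (fun i => f (i + 1)) k := by
  induction k with
  | zero => rfl
  | succ k ih =>
    show m.step (f (k+1)) (m.walk ν f (k+1)) = _
    rw [ih]
    rfl

theorem SubM.walk_add (m : SubM B) (ν : MyNode B) (f : ℕ → Bool) (N M : ℕ) :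
    m.walk ν f (N + M) = m.walk (m.walk ν f N) (fun i => f (N + i)) M := by
  induction M with
  | zero => rfl
  | succ M ih =>
    show m.step (f (N + M)) (m.walk ν f (N + M)) = m.step (f (N + M)) _
    rw [ih]

theorem SubM.walk_congr (m : SubM B) (ν : MyNode B) {f g : ℕ → Bool} {N : ℕ}
    (h : ∀ k < N, f k = g k) : m.walk ν f N = m.walk ν g N := by
  induction N with
  | zero => rfl
  | succ N ih =>
    show m.step (f N) (m.walk ν f N) = m.step (g N) (m.walk ν g N)
    rw [h N (by omega), ih (fun k hk => h k (by omega))]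

theorem SubM.reach_singleton (m : SubM B) :
    ∀ (n : ℕ) (ν : MyNode B), ν.pieces.length ≤ n → m.Good ν → ∀ f : ℕ → Bool,
    ∃ N, m.Good (m.walk ν f N) ∧ (m.walk ν f N).pieces.length = 1 ∧
      (m.walk ν f N).tgt ≤ ν.tgt := by
  intro n
  induction n with
  | zero =>
    intro ν hn h f
    obtain ⟨p, rest, hcons⟩ := List.exists_cons_of_ne_nil h.2.1
    rw [hcons] at hn
    simp at hn
  | succ n ih =>
    intro ν hn h f
    rcases Nat.lt_or_ge ν.pieces.length 2 with hlt | hge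
    · have h1 : ν.pieces.length = 1 := by
        obtain ⟨p, rest, hcons⟩ := List.exists_cons_of_ne_nil h.2.1
        have := congrArg List.length hcons
        simp at this
        omega
      exact ⟨0, h, h1, le_rfl⟩
    · cases hf0 : f 0 with
      | false =>
        refine ⟨1, (m.step_spec h).1 (f 0), ?_, (m.step_spec h).2.2.2.1 (f 0)⟩
        show (m.step (f 0) ν).pieces.length = 1
        rw [hf0]
        exact (m.step_spec h).2.2.2.2.2.1
      | true =>
        have hgood1 : m.Good (m.step true ν) := (m.step_spec h).1 true
        have hlen1 : (m.step true ν).pieces.length ≤ n := by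
          have := (m.step_spec h).2.2.2.2.2.2.2.2 hge
          omega
        obtain ⟨N, hN1, hN2, hN3⟩ := ih (m.step true ν) hlen1 hgood1 (fun i => f (i + 1))
        rw [← hf0] at hN1 hN2 hN3
        rw [← m.walk_shift ν f N] at hN1 hN2 hN3
        exact ⟨N + 1, hN1, hN2, hN3.trans ((m.step_spec h).2.2.2.1 (f 0))⟩

theorem SubM.halve (m : SubM B) {ν : MyNode B} (h : m.Good ν)
    (h1 : ν.pieces.length = 1) (f : ℕ → Bool) :
    ∃ N, m.Good (m.walk ν f N) ∧ (m.walk ν f N).pieces.length = 1 ∧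
      (m.walk ν f N).tgt ≤ ν.tgt / 2 := by
  have hgood1 : m.Good (m.step (f 0) ν) := (m.step_spec h).1 (f 0)
  have htgt1 : (m.step (f 0) ν).tgt = ν.tgt / 2 := (m.step_spec h).2.2.2.2.2.2.1 h1 (f 0)
  obtain ⟨N, hN1, hN2, hN3⟩ :=
    m.reach_singleton (m.step (f 0) ν).pieces.length _ le_rfl hgood1 (fun i => f (i + 1))
  rw [← m.walk_shift ν f N] at hN1 hN2 hN3
  exact ⟨N + 1, hN1, hN2, hN3.trans_eq htgt1⟩

theorem SubM.singleton_mu (m : SubM B) {ν : MyNode B} (h : m.Good ν)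
    (h1 : ν.pieces.length = 1) : m.μ ν.elt < ν.tgt := by
  obtain ⟨p, hp⟩ := List.length_eq_one_iff.mp h1
  have : ν.elt = p := by rw [MyNode.elt, hp]; simp
  rw [this]
  exact (h.2.2.1 p (by rw [hp]; simp)).2

theorem SubM.decay (m : SubM B) {ν : MyNode B} (h : m.Good ν) (f : ℕ → Bool)
    {δ : ℝ} (hδ : 0 < δ) : ∃ N, m.μ ((m.walk ν f N).elt) < δ := by
  have key : ∀ k : ℕ, ∃ N, m.Good (m.walk ν f N) ∧ (m.walk ν f N).pieces.length = 1 ∧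
      (m.walk ν f N).tgt ≤ ν.tgt / 2 ^ k := by
    intro k
    induction k with
    | zero =>
      obtain ⟨N, h1, h2, h3⟩ := m.reach_singleton ν.pieces.length ν le_rfl h f
      exact ⟨N, h1, h2, by simpa using h3⟩
    | succ k ih =>
      obtain ⟨N, h1, h2, h3⟩ := ih
      obtain ⟨M, hM1, hM2, hM3⟩ := m.halve h1 h2 (fun i => f (N + i))
      rw [← m.walk_add ν f N M] at hM1 hM2 hM3
      refine ⟨N + M, hM1, hM2, hM3.trans ?_⟩
      calc (m.walk ν f N).tgt / 2 ≤ (ν.tgt / 2 ^ k) / 2 := by linarith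
        _ = ν.tgt / 2 ^ (k+1) := by rw [pow_succ]; ring
  obtain ⟨k, hk⟩ := exists_pow_lt_of_lt_one (div_pos hδ h.1) (by norm_num : (1:ℝ)/2 < 1)
  obtain ⟨N, hN1, hN2, hN3⟩ := key k
  have hfin : ν.tgt / 2 ^ k < δ := by
    have hp : (0:ℝ) < 2^k := by positivity
    rw [div_pow, one_pow, div_lt_div_iff₀ hp h.1] at hk
    rw [div_lt_iff₀ hp]
    nlinarith [h.1]
  exact ⟨N, lt_of_lt_of_le (m.singleton_mu hN1 hN2) hN3 |>.trans hfin⟩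

noncomputable def SubM.rfun (m : SubM B) (k : ℕ) (s : B) : B := by
  classical
  exact if h : s ≠ ⊥ then
    (m.exists_small h (lt_min (by positivity : (0:ℝ) < (1/2)^k) (m.pos' h))).choose
  else ⊥

theorem SubM.rfun_spec (m : SubM B) (k : ℕ) {s : B} (h : s ≠ ⊥) :
    m.rfun k s ≠ ⊥ ∧ m.rfun k s ≤ s ∧ m.μ (m.rfun k s) < min ((1/2)^k) (m.μ s) := by
  classical
  obtain ⟨h1, h2, h3⟩ :=
    (m.exists_small h (lt_min (by positivity : (0:ℝ) < (1/2)^k) (m.pos' h))).choose_spec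
  rw [SubM.rfun]
  rw [dif_pos h]
  exact ⟨h1, h2, h3⟩

noncomputable def SubM.rseq (m : SubM B) : ℕ → B
  | 0 => ⊤
  | k+1 => m.rfun k (m.rseq k)

theorem SubM.rseq_ne (m : SubM B) : ∀ k, m.rseq k ≠ ⊥ := by
  intro k
  induction k with
  | zero => exact m.tnb
  | succ k ih => exact (m.rfun_spec k ih).1

theorem SubM.rseq_succ_le (m : SubM B) (k : ℕ) : m.rseq (k+1) ≤ m.rseq k :=
  (m.rfun_spec k (m.rseq_ne k)).2.1

theorem SubM.rseq_anti (m : SubM B) : Antitone m.rseq :=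
  antitone_nat_of_succ_le m.rseq_succ_le

theorem SubM.rseq_mu (m : SubM B) (k : ℕ) :
    m.μ (m.rseq (k+1)) < min ((1/2)^k) (m.μ (m.rseq k)) :=
  (m.rfun_spec k (m.rseq_ne k)).2.2

noncomputable def SubM.bpart (m : SubM B) (k : ℕ) : B := m.rseq k ⊓ (m.rseq (k+1))ᶜ

theorem SubM.bpart_ne (m : SubM B) (k : ℕ) : m.bpart k ≠ ⊥ := by
  intro h0
  have h1 : m.rseq k ≤ m.rseq (k+1) := by
    have := sup_inf_inf_compl (x := m.rseq k) (y := m.rseq (k+1))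
    rw [show m.rseq k ⊓ (m.rseq (k+1))ᶜ = m.bpart k from rfl, h0, sup_bot_eq] at this
    rw [← this]
    exact inf_le_right
  have := lt_of_le_of_lt (m.mono _ _ h1) ((m.rseq_mu k).trans_le (min_le_right _ _))
  exact absurd this (lt_irrefl _)

theorem SubM.bpart_le (m : SubM B) (k : ℕ) : m.bpart k ≤ m.rseq k := inf_le_left

theorem SubM.bpart_disj (m : SubM B) : ∀ i j, i ≠ j → Disjoint (m.bpart i) (m.bpart j) := by
  have key : ∀ i j, i < j → Disjoint (m.bpart i) (m.bpart j) := by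
    intro i j hij
    have h1 : m.bpart j ≤ m.rseq (i+1) := (m.bpart_le j).trans (m.rseq_anti hij)
    have h2 : m.bpart i ≤ (m.rseq (i+1))ᶜ := inf_le_right
    exact (disjoint_compl_left.mono_left h2).mono_right h1
  intro i j hij
  rcases lt_or_gt_of_ne hij with h | h
  · exact key i j h
  · exact (key j i h).symm

theorem SubM.rseq_inf (m : SubM B) : (⨅ k, m.rseq k) = ⊥ := by
  apply m.pos
  have hub : ∀ k : ℕ, m.μ (⨅ i, m.rseq i) ≤ (1/2)^k := by
    intro k
    have h1 : (⨅ i, m.rseq i) ≤ m.rseq (k+1) := iInf_le _ _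
    exact le_trans (m.mono _ _ h1) ((m.rseq_mu k).trans_le (min_le_left _ _)).le
  have h0 : Tendsto (fun k : ℕ => ((1:ℝ)/2)^k) atTop (𝓝 0) := by
    apply tendsto_pow_atTop_nhds_zero_of_lt_one <;> norm_num
  have := ge_of_tendsto' h0 hub
  exact le_antisymm this (m.nonneg _)

theorem SubM.bpart_sup (m : SubM B) : (⨆ k, m.bpart k) = ⊤ := by
  set y := (⨆ k, m.bpart k)ᶜ with hy
  have hyr : ∀ k, y ≤ m.rseq k := by
    intro k
    induction k with
    | zero => exact le_top
    | succ k ih =>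
      have hsplit : m.rseq k = m.bpart k ⊔ m.rseq (k+1) := by
        have := sup_inf_inf_compl (x := m.rseq k) (y := m.rseq (k+1))
        rw [inf_eq_right.mpr (m.rseq_succ_le k)] at this
        rw [← this, sup_comm]
        rfl
      have h1 : y ≤ (m.bpart k ⊔ m.rseq (k+1)) := hsplit ▸ ih
      have h2 : y ⊓ m.bpart k = ⊥ := by
        have : y ≤ (m.bpart k)ᶜ := compl_le_compl (le_iSup m.bpart k)
        exact (disjoint_compl_left.mono_left this).eq_bot
      calc y = y ⊓ (m.bpart k ⊔ m.rseq (k+1)) := (inf_eq_left.mpr h1).symm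
        _ = (y ⊓ m.bpart k) ⊔ (y ⊓ m.rseq (k+1)) := inf_sup_left _ _ _
        _ ≤ ⊥ ⊔ m.rseq (k+1) := by rw [h2]; exact sup_le_sup_left inf_le_right _
        _ = m.rseq (k+1) := bot_sup_eq _
  have hybot : y = ⊥ := by
    rw [← m.rseq_inf]
    exact le_antisymm (le_iInf hyr) (by rw [m.rseq_inf]; exact bot_le)
  have := congrArg compl hybot
  rw [hy, compl_compl, compl_bot] at this
  exact this

noncomputable def SubM.root (m : SubM B) (n : ℕ) : MyNode B :=
  ⟨m.μ (m.bpart n) + 1, [m.bpart n]⟩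

theorem SubM.root_good (m : SubM B) (n : ℕ) : m.Good (m.root n) := by
  refine ⟨by have := m.nonneg (m.bpart n); simp only [SubM.root]; linarith, by simp [SubM.root], ?_, by simp [SubM.root]⟩
  intro p hp
  have hp' : p = m.bpart n := by simpa [SubM.root] using hp
  subst hp'
  exact ⟨m.bpart_ne n, by simp only [SubM.root]; linarith⟩

theorem SubM.root_elt (m : SubM B) (n : ℕ) : (m.root n).elt = m.bpart n := by
  rw [SubM.root, MyNode.elt]
  simp

/-- The main tree elements. -/
noncomputable def SubM.e (m : SubM B) (n : ℕ) (f : ℕ → Bool) (N : ℕ) : B :=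
  (m.walk (m.root n) f N).elt

theorem SubM.e_ne (m : SubM B) (n : ℕ) (f : ℕ → Bool) (N : ℕ) : m.e n f N ≠ ⊥ :=
  (m.walk_good (m.root_good n) f N).elt_ne

theorem SubM.e_zero (m : SubM B) (n : ℕ) (f : ℕ → Bool) : m.e n f 0 = m.bpart n :=
  m.root_elt n

theorem SubM.e_anti (m : SubM B) (n : ℕ) (f : ℕ → Bool) {j k : ℕ} (h : j ≤ k) :
    m.e n f k ≤ m.e n f j := m.walk_elt_le (m.root_good n) f h

theorem SubM.e_le_bpart (m : SubM B) (n : ℕ) (f : ℕ → Bool) (N : ℕ) :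
    m.e n f N ≤ m.bpart n := by
  have := m.e_anti n f (Nat.zero_le N)
  rwa [m.e_zero n f] at this

theorem SubM.e_congr (m : SubM B) (n : ℕ) {f g : ℕ → Bool} {N : ℕ}
    (h : ∀ k < N, f k = g k) : m.e n f N = m.e n g N := by
  rw [SubM.e, SubM.e, m.walk_congr _ h]

theorem SubM.e_decay (m : SubM B) (n : ℕ) (f : ℕ → Bool) {δ : ℝ} (hδ : 0 < δ) :
    ∃ N, m.μ (m.e n f N) < δ := m.decay (m.root_good n) f hδ

theorem SubM.e_split (m : SubM B) (n : ℕ) (f : ℕ → Bool) (N : ℕ) :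
    m.e n (Function.update f N false) (N+1) ⊔ m.e n (Function.update f N true) (N+1)
      = m.e n f N ∧
    Disjoint (m.e n (Function.update f N false) (N+1))
      (m.e n (Function.update f N true) (N+1)) := by
  have hgood := m.walk_good (m.root_good n) f N
  have hw : ∀ b : Bool, m.walk (m.root n) (Function.update f N b) (N + 1) =
      m.step b (m.walk (m.root n) f N) := by
    intro b
    show m.step (Function.update f N b N) (m.walk (m.root n) (Function.update f N b) N) = _
    rw [Function.update_self]
    congr 1
    apply m.walk_congr
    intro k hk
    rw [Function.update_of_ne (by omega)]
  constructor
  · rw [SubM.e, SubM.e, SubM.e, hw false, hw true]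
    exact (m.step_spec hgood).2.1
  · rw [SubM.e, SubM.e, hw false, hw true]
    exact (m.step_spec hgood).2.2.1

/-- Disjointness of incomparable nodes. -/
theorem SubM.e_disj (m : SubM B) {n n' : ℕ} {f g : ℕ → Bool} {N M k : ℕ}
    (hk : k < N) (hk' : k < M) (hfg : ∀ j < k, f j = g j) (hne : f k ≠ g k) :
    Disjoint (m.e n f N) (m.e n' g M) := by
  rcases eq_or_ne n n' with rfl | hnn
  · have hwk : m.walk (m.root n) f k = m.walk (m.root n) g k := m.walk_congr _ hfg
    have hgood := m.walk_good (m.root_good n) f k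
    have h1 : m.e n f N ≤ (m.step (f k) (m.walk (m.root n) f k)).elt := by
      have := m.e_anti n f (show k + 1 ≤ N by omega)
      exact this
    have h2 : m.e n g M ≤ (m.step (g k) (m.walk (m.root n) g k)).elt := by
      have := m.e_anti n g (show k + 1 ≤ M by omega)
      exact this
    rw [← hwk] at h2
    have hd : Disjoint ((m.step (f k) (m.walk (m.root n) f k)).elt)
        ((m.step (g k) (m.walk (m.root n) f k)).elt) := by
      rcases Bool.eq_false_or_eq_true (f k) with hf | hf <;>
        rcases Bool.eq_false_or_eq_true (g k) with hg | hg
      · rw [hf, hg] at hne; simp at hne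
      · rw [hf, hg]; exact ((m.step_spec hgood).2.2.1).symm
      · rw [hf, hg]; exact (m.step_spec hgood).2.2.1
      · rw [hf, hg] at hne; simp at hne
    exact (hd.mono_left h1).mono_right h2
  · exact ((m.bpart_disj n n' hnn).mono_left (m.e_le_bpart n f N)).mono_right
      (m.e_le_bpart n' g M)

def Cyl (f : ℕ → Bool) (N : ℕ) : Set (ℕ → Bool) := {g | ∀ k < N, g k = f k}

theorem self_mem_cyl (f : ℕ → Bool) (N : ℕ) : f ∈ Cyl f N := fun _ _ => rfl

theorem isOpen_cyl (f : ℕ → Bool) (N : ℕ) : IsOpen (Cyl f N) := by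
  have heq : Cyl f N = ⋂ k ∈ Finset.range N, {g : ℕ → Bool | g k = f k} := by
    ext g
    simp [Cyl]
  rw [heq]
  apply isOpen_biInter_finset
  intro k _
  have : IsOpen ((fun g : ℕ → Bool => g k) ⁻¹' ({f k} : Set Bool)) :=
    (continuous_apply k).isOpen_preimage _ (isOpen_discrete _)
  exact this

theorem cyl_nhds {U : Set (ℕ → Bool)} (hU : IsOpen U) {g : ℕ → Bool} (hg : g ∈ U) :
    ∃ L, Cyl g L ⊆ U := by
  obtain ⟨I, u, hIu, hsub⟩ := isOpen_pi_iff.mp hU g hg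
  refine ⟨I.sup id + 1, fun h hh => hsub ?_⟩
  intro i hi
  have hlt : i < I.sup id + 1 := by
    have h2 := Finset.le_sup (f := id) hi
    simp only [id] at h2
    omega
  rw [hh i hlt]
  exact (hIu i hi).2

/-- Every clopen set of `2^ℕ` is determined by a finite level. -/
theorem clopen_determined {S : Set (ℕ → Bool)} (hS : IsClopen S) :
    ∃ L, ∀ g h : ℕ → Bool, (∀ k < L, g k = h k) → (g ∈ S ↔ h ∈ S) := by
  classical
  have hmem : ∀ g : ℕ → Bool, ∃ L, ∀ h, (∀ k < L, h k = g k) → (h ∈ S ↔ g ∈ S) := by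
    intro g
    by_cases hg : g ∈ S
    · obtain ⟨L, hL⟩ := cyl_nhds hS.isOpen hg
      exact ⟨L, fun h hh => iff_of_true (hL hh) hg⟩
    · obtain ⟨L, hL⟩ := cyl_nhds hS.compl.isOpen (by exact hg : g ∈ Sᶜ)
      exact ⟨L, fun h hh => iff_of_false (hL hh) hg⟩
  choose L hL using hmem
  obtain ⟨t, ht⟩ := isCompact_univ.elim_finite_subcover (fun g => Cyl g (L g))
    (fun g => isOpen_cyl g (L g)) (fun g _ => Set.mem_iUnion.mpr ⟨g, self_mem_cyl g (L g)⟩)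
  refine ⟨t.sup L, fun g h hgh => ?_⟩
  have hg' := ht (Set.mem_univ g)
  rw [Set.mem_iUnion₂] at hg'
  obtain ⟨g₀, hg₀t, hgc⟩ := hg'
  have hhc : h ∈ Cyl g₀ (L g₀) := by
    intro k hk
    have hk' : k < t.sup L := lt_of_lt_of_le hk (Finset.le_sup hg₀t)
    rw [← hgh k hk']
    exact hgc k hk
  exact (hL g₀ g hgc).trans (hL g₀ h hhc).symm

/-- Sections of a clopen subset of `ℕ × 2^ℕ` are determined at a finite level. -/
theorem clopen_section_determined {A : Set (ℕ × (ℕ → Bool))} (hA : IsClopen A) (n : ℕ) :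
    ∃ L, ∀ g h : ℕ → Bool, (∀ k < L, g k = h k) → ((n, g) ∈ A ↔ (n, h) ∈ A) := by
  have hS : IsClopen {g : ℕ → Bool | (n, g) ∈ A} :=
    hA.preimage (Continuous.prodMk_right n)
  exact clopen_determined hS

noncomputable def SubM.F (m : SubM B) (A : Set (ℕ × (ℕ → Bool))) : B :=
  ⨆ (n : ℕ) (f : ℕ → Bool) (N : ℕ) (_ : ({n} : Set ℕ) ×ˢ Cyl f N ⊆ A), m.e n f N

theorem SubM.le_F (m : SubM B) {A : Set (ℕ × (ℕ → Bool))} {n : ℕ} {f : ℕ → Bool} {N : ℕ}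
    (h : ({n} : Set ℕ) ×ˢ Cyl f N ⊆ A) : m.e n f N ≤ m.F A := by
  rw [SubM.F]
  refine le_trans ?_ (le_iSup _ n)
  refine le_trans ?_ (le_iSup _ f)
  refine le_trans ?_ (le_iSup _ N)
  exact le_iSup (fun _ : ({n} : Set ℕ) ×ˢ Cyl f N ⊆ A => m.e n f N) h

theorem SubM.F_le (m : SubM B) {A : Set (ℕ × (ℕ → Bool))} {c : B}
    (h : ∀ n f N, ({n} : Set ℕ) ×ˢ Cyl f N ⊆ A → m.e n f N ≤ c) : m.F A ≤ c := by
  rw [SubM.F]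
  exact iSup_le fun n => iSup_le fun f => iSup_le fun N => iSup_le fun hs => h n f N hs

theorem SubM.F_mono (m : SubM B) {A A' : Set (ℕ × (ℕ → Bool))} (h : A ⊆ A') :
    m.F A ≤ m.F A' :=
  m.F_le fun _ _ _ hs => m.le_F (hs.trans h)

theorem mem_prod_cyl {n a : ℕ} {g : ℕ → Bool} {f : ℕ → Bool} {N : ℕ} :
    (a, g) ∈ ({n} : Set ℕ) ×ˢ Cyl f N ↔ a = n ∧ ∀ k < N, g k = f k := by
  rw [Set.mem_prod, Set.mem_singleton_iff]
  rfl

theorem SubM.F_empty (m : SubM B) : m.F ∅ = ⊥ := by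
  refine le_antisymm (m.F_le fun n f N hs => ?_) bot_le
  exact absurd (hs (mem_prod_cyl.mpr ⟨rfl, fun k _ => rfl⟩)) (Set.notMem_empty _)

theorem SubM.F_univ (m : SubM B) : m.F Set.univ = ⊤ := by
  refine le_antisymm le_top ?_
  rw [← m.bpart_sup]
  refine iSup_le fun n => ?_
  have h : ({n} : Set ℕ) ×ˢ Cyl (fun _ => false) 0 ⊆ Set.univ := Set.subset_univ _
  have := m.le_F h
  rwa [m.e_zero] at this

/-- Level decomposition of a tree element. -/
theorem SubM.e_level (m : SubM B) (n : ℕ) (f : ℕ → Bool) (N : ℕ) : ∀ d : ℕ,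
    m.e n f N = ⨆ (g : ℕ → Bool) (_ : g ∈ Cyl f N), m.e n g (N + d) := by
  intro d
  induction d with
  | zero =>
    refine le_antisymm ?_ ?_
    · exact le_iSup₂ (f := fun (g : ℕ → Bool) (_ : g ∈ Cyl f N) => m.e n g (N + 0)) f
        (self_mem_cyl f N)
    · refine iSup₂_le fun g hg => ?_
      rw [Nat.add_zero]
      exact (m.e_congr n (fun k hk => hg k hk)).le
  | succ d ih =>
    refine le_antisymm ?_ ?_
    · rw [ih]
      refine iSup₂_le fun g hg => ?_
      have hsplit := (m.e_split n g (N + d)).1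
      rw [← hsplit]
      have hmem : ∀ b : Bool, Function.update g (N + d) b ∈ Cyl f N := by
        intro b k hk
        rw [Function.update_of_ne (by omega)]
        exact hg k hk
      refine sup_le ?_ ?_
      · exact le_iSup₂ (f := fun (g : ℕ → Bool) (_ : g ∈ Cyl f N) => m.e n g (N + (d+1)))
          (Function.update g (N + d) false) (hmem false)
      · exact le_iSup₂ (f := fun (g : ℕ → Bool) (_ : g ∈ Cyl f N) => m.e n g (N + (d+1)))
          (Function.update g (N + d) true) (hmem true)
    · refine iSup₂_le fun g hg => ?_
      refine le_trans (m.e_anti n g (show N + d ≤ N + (d+1) by omega)) ?_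
      rw [ih]
      exact le_iSup₂ (f := fun (g : ℕ → Bool) (_ : g ∈ Cyl f N) => m.e n g (N + d)) g hg

theorem SubM.F_union (m : SubM B) {A A' : Set (ℕ × (ℕ → Bool))}
    (hA : IsClopen A) (hA' : IsClopen A') : m.F (A ∪ A') = m.F A ⊔ m.F A' := by
  refine le_antisymm ?_ (sup_le (m.F_mono Set.subset_union_left)
    (m.F_mono Set.subset_union_right))
  refine m.F_le fun n f N hs => ?_
  obtain ⟨L1, hL1⟩ := clopen_section_determined hA n
  obtain ⟨L2, hL2⟩ := clopen_section_determined hA' n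
  set d := max (max L1 L2) N - N with hd
  have hNd : L1 ≤ N + d ∧ L2 ≤ N + d := by omega
  rw [m.e_level n f N d]
  refine iSup₂_le fun g hg => ?_
  have hmem : (n, g) ∈ A ∪ A' := hs (mem_prod_cyl.mpr ⟨rfl, hg⟩)
  rcases hmem with hmA | hmA'
  · refine le_trans ?_ le_sup_left
    refine m.le_F fun p hp => ?_
    obtain ⟨a, b⟩ := p
    rw [mem_prod_cyl] at hp
    obtain ⟨rfl, hb⟩ := hp
    exact (hL1 g b (fun k hk => (hb k (lt_of_lt_of_le hk hNd.1)).symm)).mp hmA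
  · refine le_trans ?_ le_sup_right
    refine m.le_F fun p hp => ?_
    obtain ⟨a, b⟩ := p
    rw [mem_prod_cyl] at hp
    obtain ⟨rfl, hb⟩ := hp
    exact (hL2 g b (fun k hk => (hb k (lt_of_lt_of_le hk hNd.2)).symm)).mp hmA'

theorem SubM.inter_key (m : SubM B) {A A' : Set (ℕ × (ℕ → Bool))} {n : ℕ}
    {f f' : ℕ → Bool} {N N' : ℕ} (hs : ({n} : Set ℕ) ×ˢ Cyl f N ⊆ A)
    (hs' : ({n} : Set ℕ) ×ˢ Cyl f' N' ⊆ A') (hagree : ∀ k < min N N', f k = f' k)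
    (hNN : N ≤ N') : m.e n f N ⊓ m.e n f' N' ≤ m.F (A ∩ A') := by
  have h1 : m.e n f' N' ≤ m.e n f N := by
    refine le_trans (m.e_anti n f' hNN) ?_
    exact (m.e_congr n (fun k hk => (hagree k (by omega)).symm)).le
  rw [inf_eq_right.mpr h1]
  refine m.le_F fun p hp => ?_
  obtain ⟨a, b⟩ := p
  rw [mem_prod_cyl] at hp
  obtain ⟨rfl, hb⟩ := hp
  constructor
  · exact hs (mem_prod_cyl.mpr ⟨rfl, fun k hk =>
      (hb k (by omega)).trans (hagree k (by omega)).symm⟩)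
  · exact hs' (mem_prod_cyl.mpr ⟨rfl, hb⟩)

theorem SubM.F_inter (m : SubM B) (A A' : Set (ℕ × (ℕ → Bool))) :
    m.F (A ∩ A') = m.F A ⊓ m.F A' := by
  refine le_antisymm (le_inf (m.F_mono Set.inter_subset_left)
    (m.F_mono Set.inter_subset_right)) ?_
  have key : ∀ n f N n' f' N', ({n} : Set ℕ) ×ˢ Cyl f N ⊆ A →
      ({n'} : Set ℕ) ×ˢ Cyl f' N' ⊆ A' →
      m.e n f N ⊓ m.e n' f' N' ≤ m.F (A ∩ A') := by
    intro n f N n' f' N' hs hs'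
    rcases eq_or_ne n n' with rfl | hnn
    · by_cases hagree : ∀ k < min N N', f k = f' k
      · rcases le_total N N' with hNN | hNN
        · exact m.inter_key hs hs' hagree hNN
        · rw [inf_comm, Set.inter_comm A A']
          exact m.inter_key hs' hs (fun k hk => (hagree k (by omega)).symm) hNN
      · push_neg at hagree
        obtain ⟨k, hk, hne⟩ := hagree
        have hex : ∃ j, f j ≠ f' j := ⟨k, hne⟩
        set k₀ := Nat.find hex with hk₀
        have hk₀k : k₀ ≤ k := Nat.find_le hne
        have hne₀ : f k₀ ≠ f' k₀ := Nat.find_spec hex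
        have hagree₀ : ∀ j < k₀, f j = f' j := fun j hj => by
          have := Nat.find_min hex hj
          simpa using this
        have hd := m.e_disj (n := n) (n' := n) (show k₀ < N by omega)
          (show k₀ < N' by omega) hagree₀ hne₀
        rw [hd.eq_bot]
        exact bot_le
    · have hd : Disjoint (m.e n f N) (m.e n' f' N') :=
        ((m.bpart_disj n n' hnn).mono_left (m.e_le_bpart n f N)).mono_right
          (m.e_le_bpart n' f' N')
      rw [hd.eq_bot]
      exact bot_le
  calc m.F A ⊓ m.F A' = ⨆ (n : ℕ) (f : ℕ → Bool) (N : ℕ)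
      (_ : ({n} : Set ℕ) ×ˢ Cyl f N ⊆ A), (m.e n f N ⊓ m.F A') := by
        rw [SubM.F, iSup_inf_eq]
        refine iSup_congr fun n => ?_
        rw [iSup_inf_eq]
        refine iSup_congr fun f => ?_
        rw [iSup_inf_eq]
        refine iSup_congr fun N => ?_
        rw [iSup_inf_eq]
    _ ≤ m.F (A ∩ A') := by
        refine iSup_le fun n => iSup_le fun f => iSup_le fun N => iSup_le fun hs => ?_
        have expand : m.e n f N ⊓ m.F A' = ⨆ (n' : ℕ) (f' : ℕ → Bool) (N' : ℕ)
            (_ : ({n'} : Set ℕ) ×ˢ Cyl f' N' ⊆ A'), (m.e n f N ⊓ m.e n' f' N') := by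
          rw [SubM.F]
          rw [inf_iSup_eq]
          refine iSup_congr fun n' => ?_
          rw [inf_iSup_eq]
          refine iSup_congr fun f' => ?_
          rw [inf_iSup_eq]
          refine iSup_congr fun N' => ?_
          rw [inf_iSup_eq]
        rw [expand]
        exact iSup_le fun n' => iSup_le fun f' => iSup_le fun N' => iSup_le fun hs' =>
          key n f N n' f' N' hs hs'

theorem SubM.F_compl (m : SubM B) {A : Set (ℕ × (ℕ → Bool))} (hA : IsClopen A) :
    m.F Aᶜ = (m.F A)ᶜ := by
  have hdis : Disjoint (m.F A) (m.F Aᶜ) := by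
    rw [disjoint_iff]
    rw [← m.F_inter A Aᶜ, Set.inter_compl_self, m.F_empty]
  have hcod : Codisjoint (m.F A) (m.F Aᶜ) := by
    rw [codisjoint_iff]
    rw [← m.F_union hA hA.compl, Set.union_compl_self, m.F_univ]
  exact (IsCompl.of_eq hdis.eq_bot hcod.eq_top).compl_eq.symm

theorem SubM.F_pos (m : SubM B) {A : Set (ℕ × (ℕ → Bool))} (hA : IsClopen A)
    (hne : A.Nonempty) : m.F A ≠ ⊥ := by
  obtain ⟨⟨n, g⟩, hng⟩ := hne
  obtain ⟨L, hL⟩ := clopen_section_determined hA n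
  have hsub : ({n} : Set ℕ) ×ˢ Cyl g L ⊆ A := by
    rintro ⟨a, b⟩ hp
    rw [mem_prod_cyl] at hp
    obtain ⟨rfl, hb⟩ := hp
    exact (hL g b (fun k hk => (hb k hk).symm)).mp hng
  intro h0
  exact m.e_ne n g L (le_bot_iff.mp (h0 ▸ m.le_F hsub))

theorem SubM.F_injOn (m : SubM B) : Set.InjOn m.F {A | IsClopen A} := by
  have key : ∀ A A' : Set (ℕ × (ℕ → Bool)), IsClopen A → IsClopen A' →
      m.F A = m.F A' → A ⊆ A' := by
    intro A A' hA hA' heq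
    by_contra hsub
    obtain ⟨x, hx1, hx2⟩ := Set.not_subset.mp hsub
    have hclop : IsClopen (A ∩ A'ᶜ) := hA.inter hA'.compl
    have h1 : m.F (A ∩ A'ᶜ) ≠ ⊥ := m.F_pos hclop ⟨x, hx1, hx2⟩
    apply h1
    rw [m.F_inter, m.F_compl hA', ← heq]
    exact inf_compl_eq_bot
  intro A hA A' hA' heq
  exact (key A A' hA hA' heq).antisymm (key A' A hA' hA heq.symm)

theorem SubM.F_basic (m : SubM B) (n : ℕ) (f : ℕ → Bool) (N : ℕ) :
    m.F (({n} : Set ℕ) ×ˢ Cyl f N) = m.e n f N := by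
  refine le_antisymm (m.F_le fun n' f' N' hs => ?_) (m.le_F subset_rfl)
  have hmem : (n', f') ∈ ({n} : Set ℕ) ×ˢ Cyl f N :=
    hs (mem_prod_cyl.mpr ⟨rfl, fun k _ => rfl⟩)
  rw [mem_prod_cyl] at hmem
  obtain ⟨rfl, hf'⟩ := hmem
  have hNN : N ≤ N' := by
    by_contra hlt
    push_neg at hlt
    set h : ℕ → Bool := fun k => if k < N' then f' k else !(f k) with hh
    have hhc : (n', h) ∈ ({n'} : Set ℕ) ×ˢ Cyl f' N' := by
      rw [mem_prod_cyl]
      exact ⟨rfl, fun k hk => by simp [hh, hk]⟩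
    have := hs hhc
    rw [mem_prod_cyl] at this
    have hN' := this.2 N' hlt
    simp [hh] at hN'
  refine le_trans (m.e_anti n' f' hNN) (m.e_congr n' hf').le

theorem SubM.F_slice (m : SubM B) (n : ℕ) :
    m.F (({n} : Set ℕ) ×ˢ (Set.univ : Set (ℕ → Bool))) = m.bpart n := by
  refine le_antisymm (m.F_le fun n' f' N' hs => ?_) ?_
  · have hmem : (n', f') ∈ ({n} : Set ℕ) ×ˢ (Set.univ : Set (ℕ → Bool)) :=
      hs (mem_prod_cyl.mpr ⟨rfl, fun k _ => rfl⟩)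
    have h1 : n' = n := hmem.1
    rw [h1]
    exact m.e_le_bpart n f' N'
  · have hsub : ({n} : Set ℕ) ×ˢ Cyl (fun _ => false) 0 ⊆
        ({n} : Set ℕ) ×ˢ (Set.univ : Set (ℕ → Bool)) := by
      rintro ⟨a, b⟩ hp
      rw [mem_prod_cyl] at hp
      exact ⟨hp.1, Set.mem_univ b⟩
    have := m.le_F hsub
    rwa [m.e_zero] at this

theorem SubM.mu_finset_sup (m : SubM B) {ι : Type*} (s : Finset ι) (a : ι → B) :
    m.μ (s.sup a) ≤ ∑ i ∈ s, m.μ (a i) := by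
  classical
  induction s using Finset.cons_induction with
  | empty => simp [m.zero]
  | cons i s hi ih =>
    rw [Finset.sup_cons, Finset.sum_cons]
    exact le_trans (m.subadd _ _) (by linarith)

/-- If a countable family below `bpart n` has rapidly decaying submeasures, its
supremum is strictly below `bpart n`. -/
theorem SubM.sup_lt (m : SubM B) (n : ℕ) (a : ℕ → B) (ha : ∀ i, a i ≤ m.bpart n)
    (hμ : ∀ i, m.μ (a i) < m.μ (m.bpart n) * (1/2)^(i+2)) :
    (⨆ i, a i) < m.bpart n := by
  set x := ⨆ i, a i with hx
  set s : ℕ → B := fun k => (Finset.range k).sup a with hs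
  set t : ℕ → B := fun k => x ⊓ (s k)ᶜ with htdef
  have hsx : (⨆ k, s k) = x := by
    refine le_antisymm (iSup_le fun k => Finset.sup_le fun i _ => le_iSup a i) ?_
    exact iSup_le fun i => le_trans (Finset.le_sup (by simp : i ∈ Finset.range (i+1)))
      (le_iSup s (i+1))
  have htanti : Antitone t := by
    intro j k hjk
    refine inf_le_inf_left x (compl_le_compl ?_)
    exact Finset.sup_mono (Finset.range_subset_range.mpr hjk)
  have htinf : (⨅ k, t k) = ⊥ := by
    refine le_bot_iff.mp ?_
    have h1 : (⨅ k, t k) ≤ x := (iInf_le t 0).trans inf_le_left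
    have h2 : (⨅ k, t k) ≤ xᶜ := by
      rw [← hsx, compl_iSup]
      exact le_iInf fun k => (iInf_le t k).trans inf_le_right
    exact (le_inf h1 h2).trans_eq inf_compl_eq_bot
  have hcont := m.cont t htanti htinf
  rw [Metric.tendsto_atTop] at hcont
  have hbpos : 0 < m.μ (m.bpart n) := m.pos' (m.bpart_ne n)
  obtain ⟨K, hK⟩ := hcont (m.μ (m.bpart n) / 4) (by linarith)
  have htK : m.μ (t K) < m.μ (m.bpart n) / 4 := by
    have := hK K le_rfl
    rwa [Real.dist_eq, sub_zero, abs_of_nonneg (m.nonneg _)] at this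
  have hsK : m.μ (s K) ≤ m.μ (m.bpart n) / 2 := by
    refine le_trans (m.mu_finset_sup (Finset.range K) a) ?_
    have hterm : ∀ i ∈ Finset.range K, m.μ (a i) ≤ m.μ (m.bpart n) * (1/2)^(i+2) :=
      fun i _ => (hμ i).le
    refine le_trans (Finset.sum_le_sum hterm) ?_
    have hgeo : ∑ i ∈ Finset.range K, m.μ (m.bpart n) * (1/2:ℝ)^(i+2) =
        m.μ (m.bpart n) / 4 * ∑ i ∈ Finset.range K, (1/2:ℝ)^i := by
      rw [Finset.mul_sum]
      refine Finset.sum_congr rfl fun i _ => ?_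
      rw [pow_add]
      ring
    rw [hgeo]
    have := sum_geometric_two_le K
    nlinarith
  have hxb : m.μ x < m.μ (m.bpart n) := by
    have hsplit : x ≤ s K ⊔ t K := by
      conv_lhs => rw [← sup_inf_inf_compl (x := x) (y := s K)]
      exact sup_le_sup_right inf_le_right _
    have := le_trans (m.mono _ _ hsplit) (m.subadd _ _)
    linarith
  exact m.lt_of_mu_lt (iSup_le ha) hxb

end Statement0Aux


/-- If `B` is an atomless complete Boolean algebra carrying a strictly
positive continuous submeasure `μ`, then there is an injective Boolean-algebra homomorphism
`F` from the algebra of clopen subsets of `ω × 2^ω` into `B` such that for every `n ∈ ω`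
and every sequence `f₁, f₂, …` of points of the Cantor space there are `N₁, N₂, …` with
`⨆ i, F ({n} × [fᵢ ↾ Nᵢ]) < F ({n} × 2^ω)`. -/
theorem statement0 (B : Type*) [CompleteBooleanAlgebra B] [Nontrivial B]
    (hatomless : ∀ b : B, ¬ IsAtom b)
    (μ : B → ℝ)
    (hzero : μ ⊥ = 0)
    (hmono : ∀ a b : B, a ≤ b → μ a ≤ μ b)
    (hsubadd : ∀ a b : B, μ (a ⊔ b) ≤ μ a + μ b)
    (hpos : ∀ a : B, μ a = 0 → a = ⊥)
    (hcont : ∀ a : ℕ → B, Antitone a → (⨅ n, a n) = ⊥ →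
      Tendsto (fun n => μ (a n)) atTop (𝓝 0)) :
    ∃ F : Set (ℕ × (ℕ → Bool)) → B,
      Set.InjOn F {A | IsClopen A} ∧
      F ∅ = ⊥ ∧
      F Set.univ = ⊤ ∧
      (∀ A A' : Set (ℕ × (ℕ → Bool)), IsClopen A → IsClopen A' → F (A ∪ A') = F A ⊔ F A') ∧
      (∀ A A' : Set (ℕ × (ℕ → Bool)), IsClopen A → IsClopen A' → F (A ∩ A') = F A ⊓ F A') ∧
      (∀ A : Set (ℕ × (ℕ → Bool)), IsClopen A → F Aᶜ = (F A)ᶜ) ∧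
      (∀ n : ℕ, ∀ f : ℕ → (ℕ → Bool), ∃ N : ℕ → ℕ,
        (⨆ i : ℕ, F ({n} ×ˢ {g : ℕ → Bool | ∀ k < N i, g k = f i k})) <
          F ({n} ×ˢ (Set.univ : Set (ℕ → Bool)))) := by
  
  classical
  set m : Statement0Aux.SubM B :=
    ⟨μ, hzero, hmono, hsubadd, hpos, hcont, hatomless, top_ne_bot⟩ with hm
  refine ⟨m.F, m.F_injOn, m.F_empty, m.F_univ, fun A A' hA hA' => m.F_union hA hA',
    fun A A' _ _ => m.F_inter A A', fun A hA => m.F_compl hA, ?_⟩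
  intro n f
  have hbpos : 0 < m.μ (m.bpart n) := m.pos' (m.bpart_ne n)
  have hchoice : ∀ i : ℕ, ∃ N, m.μ (m.e n (f i) N) < m.μ (m.bpart n) * (1/2)^(i+2) :=
    fun i => m.e_decay n (f i) (by positivity)
  choose N hN using hchoice
  refine ⟨N, ?_⟩
  have h1 : ∀ i : ℕ, m.F (({n} : Set ℕ) ×ˢ {g : ℕ → Bool | ∀ k < N i, g k = f i k}) =
      m.e n (f i) (N i) := fun i => m.F_basic n (f i) (N i)
  have h2 : (⨆ i : ℕ, m.F (({n} : Set ℕ) ×ˢ {g : ℕ → Bool | ∀ k < N i, g k = f i k})) =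
      ⨆ i : ℕ, m.e n (f i) (N i) := iSup_congr h1
  rw [h2, m.F_slice n]
  exact m.sup_lt n (fun i => m.e n (f i) (N i)) (fun i => m.e_le_bpart n (f i) (N i)) hN
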